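/- With notation as in the previous statement, there exists $C > 0$ such that for all $\vec z \in \Pi$: $C^{-1} |P_\sigma e^{-\vec z}|^2 \le (\vec 1 \cdot e^{-\vec z})\big(\vec 1 \cdot e^{-\vec z} - \vec 1 \cdot e^{-\vec z_{cr}}\big) \le C |P_\sigma e^{-\vec z}|^2$, where $P_\sigma$ is the orthogonal projection onto $\Pi = \{\vec z : \vec\sigma\cdot\vec z = 0\}$. -/

import Mathlib

open Finset

lemma phi_nonneg {t : ℝ} (ht : 0 < t) : 0 ≤ t - 1 - Real.log t := by
  have := Real.log_le_sub_one_of_pos ht; linarith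

lemma phi_le {t : ℝ} (ht : 0 < t) : t - 1 - Real.log t ≤ (t-1)^2 / t := by
  have h1 : Real.log t⁻¹ ≤ t⁻¹ - 1 := Real.log_le_sub_one_of_pos (by positivity)
  rw [Real.log_inv] at h1
  rw [le_div_iff₀ ht]
  have h2 : t * t⁻¹ = 1 := mul_inv_cancel₀ ht.ne'
  nlinarith [sq_nonneg (t-1)]

lemma sum_sigma_le {ι : Type*} [Fintype ι] (σ f : ι → ℝ) (c : ℝ)
    (hσ : ∀ k, 0 ≤ σ k) (h : ∀ k, f k ≤ c) :
    ∑ k, σ k * f k ≤ (∑ k, σ k) * c := by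
  rw [Finset.sum_mul]
  exact Finset.sum_le_sum fun k _ => mul_le_mul_of_nonneg_left (h k) (hσ k)

/-- Core upper bound: `S1·Φ ≤ 6 s² (s/σm)² · Dsq`. -/
lemma core_U {ι : Type*} [Fintype ι] [Nonempty ι] (σ x : ι → ℝ) (σm : ℝ)
    (hσ : ∀ k, 0 < σ k) (hx : ∀ k, 0 < x k)
    (hcon : ∑ k, σ k * Real.log (x k) = 0)
    (hσm : 0 < σm) (hσml : ∀ k, σm ≤ σ k) :
    (∑ k, σ k * x k) * (∑ k, σ k * (x k - 1 - Real.log (x k)))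
      ≤ 6 * (∑ k, σ k)^2 * ((∑ k, σ k)/σm)^2 * (∑ j, ∑ k, (x j - x k)^2) := by
  classical
  set s := ∑ k, σ k with hs_def
  have hs : 0 < s := Finset.sum_pos (fun k _ => hσ k) univ_nonempty
  set K := s / σm with hK_def
  have hK1 : 1 ≤ K := by
    rw [hK_def, le_div_iff₀ hσm]
    obtain ⟨k⟩ := ‹Nonempty ι›
    calc 1 * σm = σm := one_mul _
    _ ≤ σ k := hσml k
    _ ≤ s := Finset.single_le_sum (fun j _ => (hσ j).le) (mem_univ k)
  set Dsq := ∑ j, ∑ k, (x j - x k)^2 with hDsq_def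
  have hDsq0 : 0 ≤ Dsq := Finset.sum_nonneg fun j _ => Finset.sum_nonneg fun k _ => sq_nonneg _
  set D := Real.sqrt Dsq with hD_def
  have hD0 : 0 ≤ D := Real.sqrt_nonneg _
  have hDD : D^2 = Dsq := Real.sq_sqrt hDsq0
  obtain ⟨k1, -, hk1⟩ := Finset.exists_max_image univ x univ_nonempty
  obtain ⟨k0, -, hk0⟩ := Finset.exists_min_image univ x univ_nonempty
  set M := x k1 with hM_def
  set a := x k0 with ha_def
  have hk1' : ∀ k, x k ≤ M := fun k => hk1 k (mem_univ k)
  have hk0' : ∀ k, a ≤ x k := fun k => hk0 k (mem_univ k)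
  -- a ≤ 1 ≤ M
  have ha1 : a ≤ 1 := by
    by_contra h
    push_neg at h
    have : 0 < ∑ k, σ k * Real.log (x k) := by
      apply Finset.sum_pos (fun k _ => ?_) univ_nonempty
      have : (1:ℝ) < x k := lt_of_lt_of_le h (hk0' k)
      exact mul_pos (hσ k) (Real.log_pos this)
    linarith [hcon ▸ this]
  have hM1 : 1 ≤ M := by
    by_contra h
    push_neg at h
    have : ∑ k, σ k * Real.log (x k) < 0 := by
      apply Finset.sum_neg (fun k _ => ?_) univ_nonempty
      have h1 : x k < 1 := lt_of_le_of_lt (hk1' k) h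
      exact mul_neg_of_pos_of_neg (hσ k) (Real.log_neg (hx k) h1)
    linarith [hcon ▸ this]
  -- (M - a) ≤ D
  have hMa2 : (M - a)^2 ≤ Dsq := by
    calc (M - a)^2 = (x k1 - x k0)^2 := rfl
    _ ≤ ∑ k, (x k1 - x k)^2 :=
        Finset.single_le_sum (f := fun k => (x k1 - x k)^2) (fun k _ => sq_nonneg _) (mem_univ k0)
    _ ≤ Dsq :=
        Finset.single_le_sum (f := fun j => ∑ k, (x j - x k)^2)
          (fun j _ => Finset.sum_nonneg fun k _ => sq_nonneg _) (mem_univ k1)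
  have hMaD : M - a ≤ D := by
    have h := Real.sqrt_le_sqrt hMa2
    rwa [Real.sqrt_sq (by linarith [hk0' k1] : (0:ℝ) ≤ M - a)] at h
  have hMD : M ≤ 1 + D := by linarith
  have hlogM : Real.log M ≤ D := by
    have := Real.log_le_sub_one_of_pos (lt_of_lt_of_le one_pos hM1 : (0:ℝ) < M)
    linarith
  have hlogx_ub : ∀ k, Real.log (x k) ≤ D := fun k =>
    le_trans (Real.log_le_log (hx k) (hk1' k)) hlogM
  -- -log a ≤ K * D
  have hloga0 : Real.log a ≤ 0 := Real.log_nonpos (hx k0).le ha1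
  have hnega : -Real.log a ≤ K * D := by
    have hsplit : σ k0 * Real.log a + ∑ k ∈ univ.erase k0, σ k * Real.log (x k) = 0 := by
      rw [← hcon]
      exact Finset.add_sum_erase univ (fun k => σ k * Real.log (x k)) (mem_univ k0)
    have hbound : ∑ k ∈ univ.erase k0, σ k * Real.log (x k) ≤ s * D := by
      calc ∑ k ∈ univ.erase k0, σ k * Real.log (x k) ≤ ∑ k ∈ univ.erase k0, σ k * D :=
        Finset.sum_le_sum fun k _ => mul_le_mul_of_nonneg_left (hlogx_ub k) (hσ k).le
      _ ≤ ∑ k, σ k * D := Finset.sum_le_sum_of_subset_of_nonneg (Finset.erase_subset _ _)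
          (fun k _ _ => mul_nonneg (hσ k).le hD0)
      _ = s * D := by rw [← Finset.sum_mul]
    have h1 : σ k0 * (-Real.log a) ≤ s * D := by linarith
    have h2 : σm * (-Real.log a) ≤ σ k0 * (-Real.log a) :=
      mul_le_mul_of_nonneg_right (hσml k0) (by linarith)
    rw [hK_def, div_mul_eq_mul_div, le_div_iff₀ hσm]
    nlinarith
  have haKD : 1 - a ≤ K * D := by
    have := Real.log_le_sub_one_of_pos (hx k0)
    linarith
  have hDKD : D ≤ K * D := le_mul_of_one_le_left hD0 hK1
  have hxub : ∀ k, x k - 1 ≤ D := fun k => by linarith [hk1' k]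
  have hxlb : ∀ k, 1 - x k ≤ K * D := fun k => by linarith [hk0' k]
  have hx1sq : ∀ k, (x k - 1)^2 ≤ (K*D)^2 := by
    intro k
    apply sq_le_sq'
    · linarith [hxlb k]
    · linarith [hxub k]
  have hKD0 : 0 ≤ K * D := le_trans hD0 hDKD
  have hS1pos : 0 ≤ ∑ k, σ k * x k :=
    Finset.sum_nonneg fun k _ => (mul_pos (hσ k) (hx k)).le
  have hΦpos : 0 ≤ ∑ k, σ k * (x k - 1 - Real.log (x k)) :=
    Finset.sum_nonneg fun k _ => mul_nonneg (hσ k).le (phi_nonneg (hx k))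
  have key : (∑ k, σ k * x k) * (∑ k, σ k * (x k - 1 - Real.log (x k))) ≤ 6 * s^2 * K^2 * D^2 := by
    by_cases hc : K * D ≤ 1/2
    · have hxhalf : ∀ k, (1:ℝ)/2 ≤ x k := by
        intro k
        have h1 : 1 + Real.log a ≤ a := by linarith [Real.log_le_sub_one_of_pos (hx k0)]
        have := hk0' k
        linarith [hnega]
      have hphi : ∀ k, x k - 1 - Real.log (x k) ≤ 2 * (K*D)^2 := by
        intro k
        have h1 := phi_le (hx k)
        have h2 : (x k - 1)^2 / x k ≤ (x k - 1)^2 / (1/2) :=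
          div_le_div_of_nonneg_left (sq_nonneg _) (by norm_num) (hxhalf k)
        have h3 : (x k - 1)^2 / (1/2) = 2 * (x k - 1)^2 := by ring
        have h4 := hx1sq k
        linarith
      have hΦ : ∑ k, σ k * (x k - 1 - Real.log (x k)) ≤ s * (2 * (K*D)^2) :=
        sum_sigma_le σ _ _ (fun k => (hσ k).le) hphi
      have hS1 : ∑ k, σ k * x k ≤ s * (3/2) :=
        sum_sigma_le σ _ _ (fun k => (hσ k).le) (fun k => by linarith [hk1' k, hMD, hDKD])
      have := mul_le_mul hS1 hΦ hΦpos (by positivity : (0:ℝ) ≤ s * (3/2))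
      nlinarith [sq_nonneg (s*K*D), mul_pos hs hs]
    · push_neg at hc
      have h12 : 1 ≤ 2 * (K * D) := by linarith
      have hphi : ∀ k, x k - 1 - Real.log (x k) ≤ 2 * (K*D) := by
        intro k
        have h1 : -Real.log (x k) ≤ -Real.log a :=
          neg_le_neg (Real.log_le_log (hx k0) (hk0' k))
        linarith [hxub k, hDKD, hnega]
      have hΦ : ∑ k, σ k * (x k - 1 - Real.log (x k)) ≤ s * (2 * (K*D)) :=
        sum_sigma_le σ _ _ (fun k => (hσ k).le) hphi
      have hS1 : ∑ k, σ k * x k ≤ s * (3 * (K*D)) :=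
        sum_sigma_le σ _ _ (fun k => (hσ k).le) (fun k => by linarith [hk1' k, hMD, hDKD])
      have := mul_le_mul hS1 hΦ hΦpos (by positivity : (0:ℝ) ≤ s * (3 * (K*D)))
      nlinarith
  calc (∑ k, σ k * x k) * (∑ k, σ k * (x k - 1 - Real.log (x k)))
      ≤ 6 * s^2 * K^2 * D^2 := key
    _ = 6 * s^2 * K^2 * Dsq := by rw [hDD]



lemma sq_le_phi {t : ℝ} (ht : 0 < t) : (t-1)^2 ≤ 2*(t+1)*(t-1-Real.log t) := by
  set u := Real.sqrt t with hu
  have hu0 : 0 < u := Real.sqrt_pos.2 ht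
  have hut : u^2 = t := Real.sq_sqrt ht.le
  have hlog : Real.log t = 2 * Real.log u := by
    rw [hu, Real.log_sqrt ht.le]; ring
  have h1 : Real.log u ≤ u - 1 := Real.log_le_sub_one_of_pos hu0
  nlinarith [sq_nonneg (u-1), sq_nonneg (u+1), sq_nonneg ((u-1)*(u+1)), sq_nonneg (u*(u-1))]

lemma sum_mul_le_mul_sum {ι : Type*} [Fintype ι] {f g : ι → ℝ}
    (hf : ∀ k, 0 ≤ f k) (hg : ∀ k, 0 ≤ g k) :
    ∑ k, f k * g k ≤ (∑ k, f k) * (∑ k, g k) := by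
  rw [Finset.sum_mul]
  apply Finset.sum_le_sum
  intro k _
  exact mul_le_mul_of_nonneg_left (Finset.single_le_sum (fun j _ => hg j) (mem_univ k)) (hf k)

/-- Core lower bound: `Q ≤ 2 σM (1/σm + 1/s) · S1 · Φ`. -/
lemma core_L {ι : Type*} [Fintype ι] [Nonempty ι] (σ x : ι → ℝ) (σm σM : ℝ)
    (hσ : ∀ k, 0 < σ k) (hx : ∀ k, 0 < x k)
    (hcon : ∑ k, σ k * Real.log (x k) = 0)
    (hσm : 0 < σm) (hσml : ∀ k, σm ≤ σ k) (hσMu : ∀ k, σ k ≤ σM) :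
    ∑ k, σ k^2 * (x k - 1)^2
      ≤ 2 * σM * (1/σm + 1/(∑ k, σ k))
        * ((∑ k, σ k * x k) * (∑ k, σ k * (x k - 1 - Real.log (x k)))) := by
  classical
  set s := ∑ k, σ k with hs_def
  have hs : 0 < s := Finset.sum_pos (fun k _ => hσ k) univ_nonempty
  set S1 := ∑ k, σ k * x k with hS1_def
  set Φ := ∑ k, σ k * (x k - 1 - Real.log (x k)) with hΦ_def
  have hΦ0 : 0 ≤ Φ := Finset.sum_nonneg fun k _ => mul_nonneg (hσ k).le (phi_nonneg (hx k))
  -- S1 ≥ s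
  have hS1s : s ≤ S1 := by
    have : ∀ k, σ k * 1 + σ k * Real.log (x k) ≤ σ k * x k := by
      intro k
      have h1 : Real.log (x k) + 1 ≤ x k := by
        have := Real.add_one_le_exp (Real.log (x k))
        rwa [Real.exp_log (hx k)] at this
      nlinarith [hσ k]
    calc s = ∑ k, σ k * 1 + ∑ k, σ k * Real.log (x k) := by
              rw [hcon, add_zero]; simp [hs_def]
    _ = ∑ k, (σ k * 1 + σ k * Real.log (x k)) := (Finset.sum_add_distrib).symm
    _ ≤ ∑ k, σ k * x k := Finset.sum_le_sum fun k _ => this k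
  -- termwise reductions
  have step1 : ∑ k, σ k^2 * (x k - 1)^2 ≤ σM * ∑ k, σ k * (x k - 1)^2 := by
    rw [Finset.mul_sum]
    apply Finset.sum_le_sum
    intro k _
    have h2 := hσMu k
    have h3 := hσ k
    have h4 : σ k * σ k ≤ σM * σ k := mul_le_mul_of_nonneg_right (hσMu k) h3.le
    nlinarith [sq_nonneg (x k - 1), mul_le_mul_of_nonneg_right h4 (sq_nonneg (x k - 1))]
  have step2 : ∑ k, σ k * (x k - 1)^2
      ≤ 2 * (∑ k, (σ k * x k) * (x k - 1 - Real.log (x k))) + 2 * Φ := by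
    have : ∀ k ∈ univ, σ k * (x k - 1)^2
        ≤ 2 * ((σ k * x k) * (x k - 1 - Real.log (x k))) + 2 * (σ k * (x k - 1 - Real.log (x k))) := by
      intro k _
      have h1 := sq_le_phi (hx k)
      have h3 := hσ k
      nlinarith [mul_le_mul_of_nonneg_left h1 h3.le]
    calc ∑ k, σ k * (x k - 1)^2
        ≤ ∑ k, (2 * ((σ k * x k) * (x k - 1 - Real.log (x k)))
            + 2 * (σ k * (x k - 1 - Real.log (x k)))) := Finset.sum_le_sum this
    _ = 2 * (∑ k, (σ k * x k) * (x k - 1 - Real.log (x k))) + 2 * Φ := by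
        rw [Finset.sum_add_distrib, ← Finset.mul_sum, ← Finset.mul_sum]
  have step3 : ∑ k, (σ k * x k) * (x k - 1 - Real.log (x k)) ≤ S1 * (Φ / σm) := by
    have h1 : ∑ k, (σ k * x k) * (x k - 1 - Real.log (x k))
        ≤ (∑ k, σ k * x k) * (∑ k, (x k - 1 - Real.log (x k))) :=
      sum_mul_le_mul_sum (fun k => (mul_pos (hσ k) (hx k)).le) (fun k => phi_nonneg (hx k))
    have h2 : ∑ k, (x k - 1 - Real.log (x k)) ≤ Φ / σm := by
      rw [le_div_iff₀ hσm, Finset.sum_mul]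
      apply Finset.sum_le_sum
      intro k _
      have := phi_nonneg (hx k)
      have := hσml k
      nlinarith
    have hS10 : 0 ≤ S1 := Finset.sum_nonneg fun k _ => (mul_pos (hσ k) (hx k)).le
    calc ∑ k, (σ k * x k) * (x k - 1 - Real.log (x k))
        ≤ S1 * (∑ k, (x k - 1 - Real.log (x k))) := h1
    _ ≤ S1 * (Φ / σm) := mul_le_mul_of_nonneg_left h2 hS10
  have step4 : Φ ≤ S1 * (Φ / s) := by
    rw [mul_div_assoc', le_div_iff₀ hs]
    calc Φ * s = s * Φ := mul_comm _ _
    _ ≤ S1 * Φ := mul_le_mul_of_nonneg_right hS1s hΦ0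
  have hσM0 : 0 ≤ σM := le_trans (hσm.le) (le_trans (hσml (Classical.arbitrary ι)) (hσMu _))
  calc ∑ k, σ k^2 * (x k - 1)^2 ≤ σM * ∑ k, σ k * (x k - 1)^2 := step1
  _ ≤ σM * (2 * (∑ k, (σ k * x k) * (x k - 1 - Real.log (x k))) + 2 * Φ) :=
      mul_le_mul_of_nonneg_left step2 hσM0
  _ ≤ σM * (2 * (S1 * (Φ / σm)) + 2 * (S1 * (Φ / s))) := by
      apply mul_le_mul_of_nonneg_left _ hσM0
      linarith
  _ = 2 * σM * (1/σm + 1/s) * (S1 * Φ) := by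
      field_simp


lemma sum_sq_expand {ι : Type*} [Fintype ι] (σ w : ι → ℝ) (d : ℝ) :
    ∑ k, (w k - d * σ k)^2
      = (∑ k, w k^2) - 2*d*(∑ k, σ k * w k) + d^2*(∑ k, σ k^2) := by
  have : ∀ k ∈ univ, (w k - d * σ k)^2
      = w k^2 - 2*d*(σ k * w k) + d^2 * σ k^2 := by intro k _; ring
  rw [Finset.sum_congr rfl this, Finset.sum_add_distrib, Finset.sum_sub_distrib,
    ← Finset.mul_sum, ← Finset.mul_sum]

/-- The orthogonal projection minimizes the distance. -/
lemma proj_min {ι : Type*} [Fintype ι] (σ w : ι → ℝ) (hT : 0 < ∑ k, σ k^2) (c : ℝ) :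
    ∑ k, (w k - ((∑ j, σ j * w j)/(∑ j, σ j^2)) * σ k)^2 ≤ ∑ k, (w k - c * σ k)^2 := by
  set T := ∑ k, σ k^2 with hT_def
  set B := ∑ j, σ j * w j with hB_def
  rw [sum_sq_expand, sum_sq_expand]
  have h1 : 2*(B/T)*B - (B/T)^2*T = B^2/T := by field_simp; ring
  have h2 : 2*c*B - c^2*T ≤ B^2/T := by
    rw [le_div_iff₀ hT]; nlinarith [sq_nonneg (B - c*T)]
  linarith

/-- `2T·|Pw|² = ∑_{j,k} (σ_k w_j - σ_j w_k)²`. -/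
lemma proj_sq_identity {ι : Type*} [Fintype ι] (σ w : ι → ℝ) (hT : 0 < ∑ k, σ k^2) :
    2*(∑ k, σ k^2) * (∑ k, (w k - ((∑ j, σ j * w j)/(∑ j, σ j^2)) * σ k)^2)
      = ∑ j, ∑ k, (σ k * w j - σ j * w k)^2 := by
  set T := ∑ k, σ k^2 with hT_def
  set B := ∑ j, σ j * w j with hB_def
  set W2 := ∑ k, w k^2 with hW2_def
  have inner : ∀ j ∈ univ, ∑ k, (σ k * w j - σ j * w k)^2
      = w j^2 * T - 2*(σ j * w j)*B + σ j^2 * W2 := by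
    intro j _
    have : ∀ k ∈ univ, (σ k * w j - σ j * w k)^2
        = w j^2 * σ k^2 - 2*(σ j * w j)*(σ k * w k) + σ j^2 * w k^2 := by intro k _; ring
    rw [Finset.sum_congr rfl this, Finset.sum_add_distrib, Finset.sum_sub_distrib,
      ← Finset.mul_sum, ← Finset.mul_sum, ← Finset.mul_sum]
  have hR : ∑ j, ∑ k, (σ k * w j - σ j * w k)^2 = 2*T*W2 - 2*B^2 := by
    rw [Finset.sum_congr rfl inner, Finset.sum_add_distrib, Finset.sum_sub_distrib,
      ← Finset.sum_mul, ← Finset.sum_mul, ← Finset.sum_mul]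
    have e1 : (∑ i, 2*(σ i * w i)) = 2*B := by rw [hB_def, Finset.mul_sum]
    have e2 : (∑ i, σ i^2 : ℝ) = T := rfl
    simp only [← hW2_def]
    rw [e1, e2]; ring
  rw [hR, sum_sq_expand]
  rw [← hB_def]
  have hBB : ∑ k, σ k * w k = B := rfl
  field_simp
  ring

set_option maxHeartbeats 1000000 in
lemma master {ι : Type*} [Fintype ι] [Nonempty ι] (σ : ι → ℝ) (lam : ℝ)
    (hσ : ∀ k, 0 < σ k) (hlam : 0 < lam) :
    ∃ C > 0, ∀ x : ι → ℝ, (∀ k, 0 < x k) → (∑ k, σ k * Real.log (x k) = 0) →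
      C⁻¹ * (∑ k, (lam * σ k * x k
              - ((∑ j, σ j * (lam * σ j * x j)) / (∑ j, σ j ^ 2)) * σ k)^2)
          ≤ (∑ k, lam * σ k * x k) * ((∑ k, lam * σ k * x k) - lam * ∑ k, σ k)
      ∧ (∑ k, lam * σ k * x k) * ((∑ k, lam * σ k * x k) - lam * ∑ k, σ k)
          ≤ C * ∑ k, (lam * σ k * x k
              - ((∑ j, σ j * (lam * σ j * x j)) / (∑ j, σ j ^ 2)) * σ k)^2 := by
  classical
  obtain ⟨km, -, hkm⟩ := Finset.exists_min_image univ σ univ_nonempty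
  obtain ⟨kM, -, hkM⟩ := Finset.exists_max_image univ σ univ_nonempty
  set σm := σ km with hσm_def
  set σM := σ kM with hσM_def
  have hσm : 0 < σm := hσ km
  have hσml : ∀ k, σm ≤ σ k := fun k => hkm k (mem_univ k)
  have hσMu : ∀ k, σ k ≤ σM := fun k => hkM k (mem_univ k)
  have hσM : 0 < σM := hσ kM
  set s := ∑ k, σ k with hs_def
  have hs : 0 < s := Finset.sum_pos (fun k _ => hσ k) univ_nonempty
  set T := ∑ k, σ k^2 with hT_def
  have hT : 0 < T := Finset.sum_pos (fun k _ => pow_pos (hσ k) 2) univ_nonempty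
  set CL : ℝ := 2 * σM * (1/σm + 1/s) with hCL_def
  set CU : ℝ := 6 * s^2 * (s/σm)^2 * (2*T) / σm^4 with hCU_def
  have hCL0 : 0 ≤ CL := by positivity
  have hCU0 : 0 ≤ CU := by positivity
  refine ⟨CL + CU + 1, by positivity, ?_⟩
  intro x hx hcon
  set C : ℝ := CL + CU + 1 with hC_def
  have hC : 0 < C := by positivity
  set w : ι → ℝ := fun k => lam * σ k * x k with hw_def
  set Psq := ∑ k, (w k - ((∑ j, σ j * w j)/(∑ j, σ j^2)) * σ k)^2 with hPsq_def
  have hPsq0 : 0 ≤ Psq := Finset.sum_nonneg fun k _ => sq_nonneg _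
  set S1 := ∑ k, σ k * x k with hS1_def
  set Φ := ∑ k, σ k * (x k - 1 - Real.log (x k)) with hΦ_def
  have hS10 : 0 ≤ S1 := Finset.sum_nonneg fun k _ => (mul_pos (hσ k) (hx k)).le
  have hΦ0 : 0 ≤ Φ := Finset.sum_nonneg fun k _ => mul_nonneg (hσ k).le (phi_nonneg (hx k))
  -- the sum of w
  have hA : ∑ k, w k = lam * S1 := by
    rw [hS1_def, Finset.mul_sum]
    exact Finset.sum_congr rfl fun k _ => by simp only [hw_def]; ring
  -- Φ = S1 - s
  have hΦeq : Φ = S1 - s := by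
    have : ∀ k ∈ univ, σ k * (x k - 1 - Real.log (x k))
        = σ k * x k - σ k - σ k * Real.log (x k) := by intro k _; ring
    rw [hΦ_def, Finset.sum_congr rfl this, Finset.sum_sub_distrib, Finset.sum_sub_distrib,
      hcon, sub_zero]
  -- middle quantity
  have hMid : (∑ k, w k) * ((∑ k, w k) - lam * s) = lam^2 * (S1 * Φ) := by
    rw [hA, hΦeq]; ring
  have hMid0 : 0 ≤ lam^2 * (S1 * Φ) := by positivity
  -- upper bound
  have hupper : lam^2 * (S1 * Φ) ≤ CU * Psq := by
    have hBU := core_U σ x σm hσ hx hcon hσm hσml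
    have hid := proj_sq_identity σ w hT
    have hlow : lam^2 * σm^4 * (∑ j, ∑ k, (x j - x k)^2) ≤ 2 * T * Psq := by
      rw [hPsq_def, hid, Finset.mul_sum]
      apply Finset.sum_le_sum
      intro j _
      rw [Finset.mul_sum]
      apply Finset.sum_le_sum
      intro k _
      have h1 : σ k * w j - σ j * w k = lam * (σ j * σ k) * (x j - x k) := by
        simp only [hw_def]; ring
      rw [h1]
      have h2 : σm^2 ≤ σ j * σ k := by nlinarith [hσml j, hσml k, hσm.le, hσ j, hσ k]
      have h3 : σm^4 ≤ (σ j * σ k)^2 := by nlinarith [h2, sq_nonneg σm, hσm.le]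
      calc lam^2 * σm^4 * (x j - x k)^2 ≤ lam^2 * (σ j * σ k)^2 * (x j - x k)^2 := by
            have h4 := mul_le_mul_of_nonneg_left h3 (sq_nonneg lam)
            exact mul_le_mul_of_nonneg_right h4 (sq_nonneg _)
      _ = (lam * (σ j * σ k) * (x j - x k))^2 := by ring
    have hstep : lam^2 * (S1 * Φ) ≤ lam^2 * (6 * s^2 * (s/σm)^2 * (∑ j, ∑ k, (x j - x k)^2)) :=
      mul_le_mul_of_nonneg_left hBU (by positivity)
    have hrw : lam^2 * (6 * s^2 * (s/σm)^2 * (∑ j, ∑ k, (x j - x k)^2))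
        = (6 * s^2 * (s/σm)^2 / σm^4) * (lam^2 * σm^4 * (∑ j, ∑ k, (x j - x k)^2)) := by
      field_simp
    have hfin : (6 * s^2 * (s/σm)^2 / σm^4) * (lam^2 * σm^4 * (∑ j, ∑ k, (x j - x k)^2))
        ≤ (6 * s^2 * (s/σm)^2 / σm^4) * (2 * T * Psq) :=
      mul_le_mul_of_nonneg_left hlow (by positivity)
    have hCUeq : (6 * s^2 * (s/σm)^2 / σm^4) * (2 * T * Psq) = CU * Psq := by
      rw [hCU_def]; field_simp
    linarith
  -- lower bound
  have hlower : Psq ≤ CL * (lam^2 * (S1 * Φ)) := by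
    have hmin := proj_min σ w hT lam
    have heq : ∑ k, (w k - lam * σ k)^2 = lam^2 * ∑ k, σ k^2 * (x k - 1)^2 := by
      rw [Finset.mul_sum]
      exact Finset.sum_congr rfl fun k _ => by simp only [hw_def]; ring
    have hQ := core_L σ x σm σM hσ hx hcon hσm hσml hσMu
    calc Psq ≤ ∑ k, (w k - lam * σ k)^2 := hmin
    _ = lam^2 * ∑ k, σ k^2 * (x k - 1)^2 := heq
    _ ≤ lam^2 * (CL * (S1 * Φ)) := by
        apply mul_le_mul_of_nonneg_left _ (sq_nonneg lam)
        rw [hCL_def]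
        exact hQ
    _ = CL * (lam^2 * (S1 * Φ)) := by ring
  constructor
  · rw [hMid]
    have h1 : Psq ≤ C * (lam^2 * (S1 * Φ)) := by
      calc Psq ≤ CL * (lam^2 * (S1 * Φ)) := hlower
      _ ≤ C * (lam^2 * (S1 * Φ)) := by
          apply mul_le_mul_of_nonneg_right _ hMid0
          rw [hC_def]; linarith
    calc C⁻¹ * Psq ≤ C⁻¹ * (C * (lam^2 * (S1 * Φ))) :=
          mul_le_mul_of_nonneg_left h1 (by positivity)
    _ = lam^2 * (S1 * Φ) := by field_simp
  · rw [hMid]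
    calc lam^2 * (S1 * Φ) ≤ CU * Psq := hupper
    _ ≤ C * Psq := by
        apply mul_le_mul_of_nonneg_right _ hPsq0
        rw [hC_def]; linarith



/-- There exists `C > 0` such that for all `z` in the hyperplane `σ·z = 0`,
`C⁻¹ |P_σ e^{-z}|² ≤ (𝟙·e^{-z})(𝟙·e^{-z} - 𝟙·e^{-z_cr}) ≤ C |P_σ e^{-z}|²`,
where `P_σ` is the orthogonal projection onto `{z : σ·z = 0}` and
`z_cr = -log(λ_cr σ)`, `λ_cr = exp(-μ₀ σ·log σ)`, `μ₀ = 1/(𝟙·σ)`. -/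
theorem stmt_13 (n : ℕ) (hn : 2 ≤ n) :
    let σ : Fin (n-1) → ℝ := fun k => (((k:ℕ):ℝ) + 1) * ((n:ℝ) - (((k:ℕ):ℝ) + 1)) / 2
    let μ₀ : ℝ := (∑ k, σ k)⁻¹
    let lamcr : ℝ := Real.exp (-μ₀ * ∑ k, σ k * Real.log (σ k))
    let zcr : Fin (n-1) → ℝ := fun k => -Real.log (lamcr * σ k)
    ∃ C > 0, ∀ z : Fin (n-1) → ℝ, (∑ k, σ k * z k = 0) →
      C⁻¹ * (∑ k, (Real.exp (-z k)
              - ((∑ j, σ j * Real.exp (-z j)) / (∑ j, σ j ^ 2)) * σ k) ^ 2)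
          ≤ (∑ k, Real.exp (-z k))
              * ((∑ k, Real.exp (-z k)) - ∑ k, Real.exp (-zcr k))
      ∧ (∑ k, Real.exp (-z k))
              * ((∑ k, Real.exp (-z k)) - ∑ k, Real.exp (-zcr k))
          ≤ C * ∑ k, (Real.exp (-z k)
              - ((∑ j, σ j * Real.exp (-z j)) / (∑ j, σ j ^ 2)) * σ k) ^ 2 := by
  intro σ μ₀ lamcr zcr
  haveI : Nonempty (Fin (n-1)) := ⟨⟨0, by omega⟩⟩
  have hσ : ∀ k : Fin (n-1), 0 < σ k := by
    intro k
    have hk : (k:ℕ) + 1 < n := by have := k.isLt; omega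
    have h2 : ((k:ℕ):ℝ) + 1 < (n:ℝ) := by exact_mod_cast hk
    have hd : σ k = (((k:ℕ):ℝ) + 1) * ((n:ℝ) - (((k:ℕ):ℝ) + 1)) / 2 := rfl
    rw [hd]
    have h3 : (0:ℝ) < (n:ℝ) - (((k:ℕ):ℝ)+1) := by linarith
    positivity
  have hlam : 0 < lamcr := Real.exp_pos _
  have hs : 0 < ∑ k, σ k := Finset.sum_pos (fun k _ => hσ k) univ_nonempty
  have hm : ∑ k, Real.exp (-zcr k) = lamcr * ∑ k, σ k := by
    rw [Finset.mul_sum]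
    apply Finset.sum_congr rfl
    intro k _
    have hzc : zcr k = -Real.log (lamcr * σ k) := rfl
    rw [hzc, neg_neg, Real.exp_log (mul_pos hlam (hσ k))]
  obtain ⟨C, hC, hmain⟩ := master σ lamcr hσ hlam
  refine ⟨C, hC, ?_⟩
  intro z hz
  set x : Fin (n-1) → ℝ := fun k => Real.exp (-z k) / (lamcr * σ k) with hx_def
  have hxpos : ∀ k, 0 < x k := fun k => div_pos (Real.exp_pos _) (mul_pos hlam (hσ k))
  have hv : ∀ k, Real.exp (-z k) = lamcr * σ k * x k := by
    intro k
    simp only [hx_def]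
    rw [mul_comm, div_mul_cancel₀ _ (mul_pos hlam (hσ k)).ne']
  have hcon : ∑ k, σ k * Real.log (x k) = 0 := by
    have hlx : ∀ k, Real.log (x k) = -z k - Real.log lamcr - Real.log (σ k) := by
      intro k
      simp only [hx_def]
      rw [Real.log_div (Real.exp_ne_zero _) (mul_pos hlam (hσ k)).ne',
        Real.log_exp, Real.log_mul hlam.ne' (hσ k).ne']
      ring
    have h1 : ∀ k ∈ Finset.univ, σ k * Real.log (x k)
        = σ k * (-z k) - σ k * Real.log lamcr - σ k * Real.log (σ k) := by
      intro k _; rw [hlx k]; ring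
    rw [Finset.sum_congr rfl h1, Finset.sum_sub_distrib, Finset.sum_sub_distrib]
    have h2 : ∑ k, σ k * (-z k) = 0 := by
      have he : ∑ k, σ k * (-z k) = -∑ k, σ k * z k := by
        rw [← Finset.sum_neg_distrib]
        exact Finset.sum_congr rfl fun k _ => by ring
      rw [he, hz, neg_zero]
    have h3 : ∑ k, σ k * Real.log lamcr = (∑ k, σ k) * Real.log lamcr := by
      rw [Finset.sum_mul]
    have h4 : Real.log lamcr = -(∑ k, σ k)⁻¹ * ∑ k, σ k * Real.log (σ k) := by
      have hl : lamcr = Real.exp (-μ₀ * ∑ k, σ k * Real.log (σ k)) := rfl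
      rw [hl, Real.log_exp]
    have h5 : (∑ k, σ k) * ((∑ k, σ k)⁻¹ * (∑ k, σ k * Real.log (σ k)))
        = ∑ k, σ k * Real.log (σ k) := by
      rw [← mul_assoc, mul_inv_cancel₀ hs.ne', one_mul]
    rw [h2, h3, h4]
    linarith [h5]
  have hgoal := hmain x hxpos hcon
  simp only [hv]
  rw [hm]
  exact hgoal
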